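/- Uniform bound for the algorithm-generated evolutions. Let T > 0, α ∈ {0,1}, f ∈ W^{1,2}([0,T]; 𝓕), and let v₀ ∈ 𝓔 be a critical point of v ↦ J(v) + αψ(v − v₀) on 𝐀(f(0)). Assume (J1)–(J3) hold, and (Ψ1)–(Ψ3) if α = 1. Then there exists a constant Z₁ > 0 (depending only on J, A, γ, L, η, ψ, v₀ and f, but not on δ) such that for every δ ∈ (0,1), every function v_δ : [−δ,T] → 𝓔 constructed by the algorithm (choosing at each step i a cluster point v^i of the iterates v^i_j and setting v_δ = v^i on [iδ,(i+1)δ)) satisfies ‖v_δ(t)‖ ≤ Z₁ for every t ∈ [0,T]. -/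

import Mathlib

open MeasureTheory Filter Set
open scoped RealInnerProductSpace Topology Pointwise ENNReal

noncomputable section

/-- The Fréchet subdifferential of `S : E → ℝ` at `u`. -/
def fsub {E : Type*} [NormedAddCommGroup E] [InnerProductSpace ℝ E]
    (S : E → ℝ) (u : E) : Set E :=
  {ξ | 0 ≤ Filter.liminf (fun v => (S v - S u - ⟪ξ, v - u⟫) / ‖v - u‖) (𝓝[≠] u)}

/-- The convex subdifferential of `ψ : E → ℝ` at `v`. -/
def csub {E : Type*} [NormedAddCommGroup E] [InnerProductSpace ℝ E]
    (ψ : E → ℝ) (v : E) : Set E :=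
  {ξ | ∀ w, ψ v + ⟪ξ, w - v⟫ ≤ ψ w}

/-- `u` is a critical point of `S` on the affine space `{v | A v = fv}`. -/
def IsCritPt {E F : Type*} [NormedAddCommGroup E] [InnerProductSpace ℝ E]
    [FiniteDimensional ℝ E] [NormedAddCommGroup F] [InnerProductSpace ℝ F]
    [FiniteDimensional ℝ F] (A : E →ₗ[ℝ] F) (S : E → ℝ) (fv : F) (u : E) : Prop :=
  A u = fv ∧ (fsub S u ∩ Set.range (LinearMap.adjoint A)).Nonempty

/-- A discrete quasistatic evolution with time step `δ`, initial condition `v0`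
and constraint `f` on the time interval `[-δ, T]`. -/
def IsDiscreteQE {E F : Type*} [NormedAddCommGroup E] [InnerProductSpace ℝ E]
    [FiniteDimensional ℝ E] [NormedAddCommGroup F] [InnerProductSpace ℝ F]
    [FiniteDimensional ℝ F] (J ψ : E → ℝ) (α : ℝ) (A : E →ₗ[ℝ] F) (T δ : ℝ)
    (f : ℝ → F) (v0 : E) (vδ : ℝ → E) : Prop :=
  (∀ t ∈ Set.Ico (-δ) δ ∩ Set.Icc (-δ) T, vδ t = v0) ∧
  (∀ i : ℕ, (i : ℝ) * δ ≤ T →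
    ∀ t ∈ Set.Icc (0 : ℝ) T ∩ Set.Ico ((i : ℝ) * δ) ((i : ℝ) * δ + δ),
      vδ t = vδ ((i : ℝ) * δ)) ∧
  (∀ i : ℕ, (i : ℝ) * δ ≤ T →
    IsCritPt A (fun v => J v + α * ψ (v - vδ ((i : ℝ) * δ - δ))) (f ((i : ℝ) * δ))
      (vδ ((i : ℝ) * δ)))

/-- An approximable quasistatic evolution with initial condition `v0` and constraint `f`. -/
def IsApproxQE {E F : Type*} [NormedAddCommGroup E] [InnerProductSpace ℝ E]
    [FiniteDimensional ℝ E] [MeasurableSpace E] [BorelSpace E]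
    [NormedAddCommGroup F] [InnerProductSpace ℝ F] [FiniteDimensional ℝ F]
    (J ψ : E → ℝ) (α : ℝ) (A : E →ₗ[ℝ] F) (T : ℝ) (f : ℝ → F)
    (v0 : E) (v : ℝ → E) : Prop :=
  Measurable v ∧ (∃ C : ℝ, ∀ t ∈ Set.Icc (0 : ℝ) T, ‖v t‖ ≤ C) ∧
  ∀ t ∈ Set.Icc (0 : ℝ) T, ∃ (δ : ℕ → ℝ) (vd : ℕ → ℝ → E),
    (∀ k, δ k ∈ Set.Ioo (0 : ℝ) 1) ∧ Tendsto δ atTop (𝓝 0) ∧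
    (∀ k, IsDiscreteQE J ψ α A T (δ k) f v0 (vd k)) ∧
    Filter.liminf (fun k => ‖vd k t - v t‖) atTop = 0

/-- `s` is the `ψ`-sum associated with some partition `a = t₀ < t₁ < ⋯ < t_k = b`. -/
def IsPartSum {E : Type*} [NormedAddCommGroup E] (ψ : E → ℝ) (u : ℝ → E)
    (a b : ℝ) (s : ℝ) : Prop :=
  ∃ (k : ℕ) (t : ℕ → ℝ), t 0 = a ∧ t k = b ∧ (∀ i < k, t i < t (i + 1)) ∧
    s = ∑ i ∈ Finset.range k, ψ (u (t (i + 1)) - u (t i))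

/-- The `ψ`-variation of `u` on `[a,b]`, as a real number (supremum of partition sums). -/
def psiVar {E : Type*} [NormedAddCommGroup E] (ψ : E → ℝ) (u : ℝ → E) (a b : ℝ) : ℝ :=
  sSup {s : ℝ | IsPartSum ψ u a b s}

/-- The `ψ`-variation of `u` on `[a,b]`, with values in `[0,∞]`. -/
def psiVarE {E : Type*} [NormedAddCommGroup E] (ψ : E → ℝ) (u : ℝ → E) (a b : ℝ) : ℝ≥0∞ :=
  sSup {s : ℝ≥0∞ | ∃ r : ℝ, IsPartSum ψ u a b r ∧ s = ENNReal.ofReal r}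

/-- The data of the incremental minimization algorithm: `vi i` is the approximate
solution at step `i` (a cluster point of the inner iterates `vseq i`), produced from
`vi (i-1)` by iteratively minimizing `v ↦ J v + η ‖v - wⱼ‖² + α ψ (v - vi (i-1))`. -/
def AlgData {E F : Type*} [NormedAddCommGroup E] [InnerProductSpace ℝ E]
    [FiniteDimensional ℝ E] [NormedAddCommGroup F] [InnerProductSpace ℝ F]
    [FiniteDimensional ℝ F] (J ψ : E → ℝ) (α : ℝ) (A : E →ₗ[ℝ] F) (η T δ : ℝ)
    (f : ℝ → F) (v0 : E) (vi : ℕ → E) (vseq : ℕ → ℕ → E) : Prop :=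
  vi 0 = v0 ∧
  ∀ i : ℕ, 1 ≤ i → (i : ℝ) * δ ≤ T →
    vseq i 0 = vi (i - 1) ∧
    (∀ j : ℕ, A (vseq i (j + 1)) = f ((i : ℝ) * δ) ∧
      ∀ u : E, A u = f ((i : ℝ) * δ) →
        J (vseq i (j + 1)) + η * ‖vseq i (j + 1) - vseq i j‖ ^ 2
            + α * ψ (vseq i (j + 1) - vseq i 0)
          ≤ J u + η * ‖u - vseq i j‖ ^ 2 + α * ψ (u - vseq i 0)) ∧
    MapClusterPt (vi i) atTop (vseq i)

/-- The piecewise constant evolution associated with the algorithm outputs `vi`. -/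
def AlgEvol {E : Type*} [NormedAddCommGroup E] (T δ : ℝ) (v0 : E) (vi : ℕ → E)
    (vδ : ℝ → E) : Prop :=
  (∀ t ∈ Set.Ico (-δ) (0 : ℝ), vδ t = v0) ∧
  (∀ i : ℕ, (i : ℝ) * δ ≤ T →
    ∀ t ∈ Set.Icc (-δ) T ∩ Set.Ico ((i : ℝ) * δ) ((i : ℝ) * δ + δ), vδ t = vi i)



set_option linter.unusedSectionVars false
set_option maxHeartbeats 4000000

section ZZHelpers

variable {E : Type*} [NormedAddCommGroup E] [InnerProductSpace ℝ E] [FiniteDimensional ℝ E]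

lemma zz_sSup_nonneg (S : Set ℝ) (h : ∀ ε : ℝ, 0 < ε → -ε ∈ S) : 0 ≤ sSup S := by
  by_cases hb : BddAbove S
  · by_contra h0
    push_neg at h0
    have h1 : -(-(sSup S) / 2) ≤ sSup S := le_csSup hb (h _ (by linarith))
    linarith
  · rw [Real.sSup_of_not_bddAbove hb]

lemma zz_liminf_nonneg {l : Filter E} (g : E → ℝ)
    (h : ∀ ε : ℝ, 0 < ε → ∀ᶠ v in l, -ε ≤ g v) : 0 ≤ liminf g l := by
  rw [Filter.liminf_eq]
  exact zz_sSup_nonneg _ (fun ε hε => h ε hε)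

lemma zz_mem_fsub_of_quadratic (S : E → ℝ) (u ξ : E) (C : ℝ)
    (h : ∀ v, -C * ‖v - u‖ ^ 2 ≤ S v - S u - ⟪ξ, v - u⟫) : ξ ∈ fsub S u := by
  have hC : 0 ≤ |C| + 1 := by positivity
  apply zz_liminf_nonneg
  intro ε hε
  have hr : 0 < ε / (|C| + 1) := by positivity
  rw [eventually_nhdsWithin_iff]
  filter_upwards [Metric.ball_mem_nhds u hr] with v hv hne
  have hvn : v ≠ u := hne
  have hpos : 0 < ‖v - u‖ := by
    rw [norm_pos_iff, sub_ne_zero]; exact hvn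
  rw [le_div_iff₀ hpos]
  have h1 := h v
  have h2 : ‖v - u‖ < ε / (|C| + 1) := by
    rw [Metric.mem_ball, dist_eq_norm] at hv; exact hv
  have h3 : C ≤ |C| := le_abs_self C
  have h4 : ‖v - u‖ * (|C| + 1) < ε := by
    rw [← lt_div_iff₀ (by positivity)] ; exact h2
  nlinarith [norm_nonneg (v - u), sq_nonneg ‖v - u‖]

lemma zz_lsc (J : E → ℝ) (L : ℝ)
    (hJ3 : ∀ v ξ : E, ξ ∈ fsub J v → ‖ξ‖ ≤ L * (J v + 1)) :
    LowerSemicontinuous J := by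
  rcases subsingleton_or_nontrivial E with hE | hE
  · intro u y hy
    filter_upwards with v
    rwa [Subsingleton.elim v u]
  · intro u y hy
    by_contra hcon
    have hF : ∃ᶠ v in 𝓝 u, J v ≤ y := by
      rw [Filter.not_eventually] at hcon
      exact hcon.mono (fun v hv => not_lt.1 hv)
    -- every ξ is in fsub J u
    have hall : ∀ ξ : E, ξ ∈ fsub J u := by
      intro ξ
      have hempty : {a : ℝ | ∀ᶠ v in 𝓝[≠] u, a ≤ (J v - J u - ⟪ξ, v - u⟫) / ‖v - u‖} = ∅ := by
        ext a
        simp only [Set.mem_setOf_eq, Set.mem_empty_iff_false, iff_false]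
        intro ha
        set g := J u - y with hg
        have hgpos : 0 < g := by simp [hg]; linarith
        set r := g / (|a| + ‖ξ‖ + 1) with hr
        have hrpos : 0 < r := by positivity
        -- frequently in 𝓝[≠] u : J v ≤ y
        have hF2 : ∃ᶠ v in 𝓝[≠] u, J v ≤ y := by
          rw [frequently_nhdsWithin_iff]
          apply hF.mono
          intro v hv
          refine ⟨hv, ?_⟩
          intro hvu
          rw [Set.mem_singleton_iff] at hvu
          rw [hvu] at hv; linarith
        have hball : ∀ᶠ v in 𝓝[≠] u, ‖v - u‖ < r := by
          apply eventually_nhdsWithin_of_eventually_nhds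
          filter_upwards [Metric.ball_mem_nhds u hrpos] with v hv
          rw [Metric.mem_ball, dist_eq_norm] at hv; exact hv
        obtain ⟨v, hv1, hv2, hv3⟩ := (hF2.and_eventually (ha.and hball)).exists
        have hvne : v ≠ u := by intro hvu; rw [hvu] at hv1; linarith
        have hpos : 0 < ‖v - u‖ := by rw [norm_pos_iff, sub_ne_zero]; exact hvne
        rw [le_div_iff₀ hpos] at hv2
        have hCS : -(‖ξ‖ * ‖v - u‖) ≤ ⟪ξ, v - u⟫ := neg_le_of_abs_le (abs_real_inner_le_norm ξ (v-u))
        have h5 : ‖v - u‖ * (|a| + ‖ξ‖ + 1) < g := by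
          rw [← lt_div_iff₀ (by positivity)]; exact hv3
        have h6 : a * ‖v - u‖ ≤ y - J u + ‖ξ‖ * ‖v - u‖ := by nlinarith
        have h7 : -|a| ≤ a := neg_abs_le a
        nlinarith [norm_nonneg (v - u)]
      rw [fsub, Set.mem_setOf_eq, Filter.liminf_eq, hempty, Real.sSup_empty]
    obtain ⟨e, he⟩ := exists_ne (0 : E)
    have hen : 0 < ‖e‖ := norm_pos_iff.2 he
    set ξ := ((|L * (J u + 1)| + 1) / ‖e‖) • e with hξ
    have h8 := hJ3 u ξ (hall ξ)
    have h9 : ‖ξ‖ = |L * (J u + 1)| + 1 := by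
      rw [hξ, norm_smul, Real.norm_eq_abs, abs_div, abs_of_nonneg (by positivity), abs_of_nonneg (norm_nonneg e)]
      field_simp
    rw [h9] at h8
    have := le_abs_self (L * (J u + 1))
    linarith

lemma zz_exists_min (η : ℝ) (hη : 0 < η) (g : E → ℝ) (hg : LowerSemicontinuous g)
    (hco : ∀ v, η * ‖v‖ ^ 2 ≤ g v) : ∃ p : E, ∀ v, g p ≤ g v := by
  have hbdd : BddBelow (Set.range g) := by
    refine ⟨0, ?_⟩
    rintro _ ⟨v, rfl⟩
    have := hco v
    nlinarith [sq_nonneg ‖v‖, norm_nonneg v]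
  have hne : (Set.range g).Nonempty := ⟨g 0, 0, rfl⟩
  set m := sInf (Set.range g) with hm
  have hseq : ∀ n : ℕ, ∃ v : E, g v < m + 1 / (n + 1) := by
    intro n
    obtain ⟨a, ⟨v, rfl⟩, ha⟩ := Real.lt_sInf_add_pos hne (by positivity : (0:ℝ) < 1 / (n+1))
    exact ⟨v, ha⟩
  choose v hv using hseq
  set R := Real.sqrt ((m + 1) / η) with hR
  have hball : ∀ n, v n ∈ Metric.closedBall (0 : E) R := by
    intro n
    rw [Metric.mem_closedBall, dist_zero_right]
    have h1 : η * ‖v n‖ ^ 2 ≤ m + 1 := by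
      have := hco (v n)
      have h2 : (1 : ℝ) / (n + 1) ≤ 1 := by
        rw [div_le_one (by positivity)]; push_cast; linarith [Nat.cast_nonneg (α := ℝ) n]
      linarith [hv n]
    rw [hR, show (m+1)/η = ‖v n‖^2 + ((m+1)/η - ‖v n‖^2) by ring]
    have h3 : 0 ≤ (m + 1) / η - ‖v n‖ ^ 2 := by
      rw [sub_nonneg, le_div_iff₀ hη]; nlinarith
    calc ‖v n‖ = Real.sqrt (‖v n‖ ^ 2) := by rw [Real.sqrt_sq (norm_nonneg _)]
    _ ≤ _ := Real.sqrt_le_sqrt (by linarith)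
  obtain ⟨p, _, φ, hφmono, hφtend⟩ :=
    (isCompact_closedBall (0:E) R).tendsto_subseq hball
  refine ⟨p, fun u => ?_⟩
  have hpm : g p ≤ m := by
    by_contra hcon
    push_neg at hcon
    have hy : ∀ᶠ w in 𝓝 p, (m + g p) / 2 < g w := hg p _ (by linarith)
    have := hφtend.eventually hy
    obtain ⟨k, hk1, hk2⟩ := (this.and (Filter.eventually_atTop.2
      ⟨Nat.ceil (2 / (g p - m)), fun b hb => hb⟩)).exists
    have h1 : g (v (φ k)) < m + 1 / (φ k + 1) := hv (φ k)
    have h2 : (k : ℝ) ≤ φ k := by exact_mod_cast (hφmono.id_le k)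
    have hk3 : (2 : ℝ) / (g p - m) ≤ k := by
      have := Nat.ceil_le.1 (le_refl (Nat.ceil (2 / (g p - m))))
      calc (2:ℝ) / (g p - m) ≤ (Nat.ceil (2 / (g p - m)) : ℝ) := Nat.le_ceil _
      _ ≤ k := by exact_mod_cast hk2
    have h4 : 1 / ((φ k : ℝ) + 1) ≤ (g p - m) / 2 := by
      rw [div_le_div_iff₀ (by positivity) (by norm_num)]
      have : (2:ℝ) ≤ (g p - m) * k := by
        rw [div_le_iff₀ (by linarith)] at hk3; linarith [hk3]
      nlinarith
    simp only [Function.comp] at hk1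
    linarith
  exact le_trans hpm (csInf_le hbdd ⟨u, rfl⟩)

-- Algebra: ‖a - c‖² = ‖a - b‖² - 2⟪a - b, c - b⟫ + ‖c - b‖²
lemma zz_alg1 (a b c : E) :
    ‖a - c‖ ^ 2 = ‖a - b‖ ^ 2 - 2 * ⟪a - b, c - b⟫ + ‖c - b‖ ^ 2 := by
  have h : a - c = (a - b) - (c - b) := by abel
  rw [h, norm_sub_sq_real]

-- Consequences of prox minimality
lemma zz_prox_subgrad (J : E → ℝ) (η : ℝ) (L : ℝ)
    (hJ3 : ∀ v ξ : E, ξ ∈ fsub J v → ‖ξ‖ ≤ L * (J v + 1))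
    (lam : ℝ) (hlam : 0 < lam) (s p : E)
    (hp : ∀ v : E, J p + η * ‖p‖ ^ 2 + (1 / (2 * lam)) * ‖p - s‖ ^ 2 ≤
      J v + η * ‖v‖ ^ 2 + (1 / (2 * lam)) * ‖v - s‖ ^ 2) :
    ‖(1 / lam) • (s - p) - (2 * η) • p‖ ≤ L * (J p + 1) := by
  apply hJ3
  apply zz_mem_fsub_of_quadratic _ _ _ (1 / (2 * lam) + η)
  intro v
  have h1 := hp v
  have h2 : ‖v - s‖ ^ 2 = ‖v - p‖ ^ 2 + 2 * ⟪v - p, p - s⟫ + ‖p - s‖ ^ 2 := by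
    have h : v - s = (v - p) + (p - s) := by abel
    rw [h, norm_add_sq_real]
  have h3 : ‖v‖ ^ 2 = ‖p‖ ^ 2 + 2 * ⟪p, v - p⟫ + ‖v - p‖ ^ 2 := by
    have h : v = p + (v - p) := by abel
    rw [h, norm_add_sq_real]
    have : p + (v - p) - p = v - p := by abel
    rw [this]
  have h4 : ⟪(1 / lam) • (s - p) - (2 * η) • p, v - p⟫
      = (1 / lam) * ⟪s - p, v - p⟫ - (2 * η) * ⟪p, v - p⟫ := by
    rw [inner_sub_left, real_inner_smul_left, real_inner_smul_left]
  have h5 : ⟪v - p, p - s⟫ = -⟪s - p, v - p⟫ := by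
    rw [real_inner_comm]
    rw [show p - s = -(s-p) by abel, inner_neg_left]
  rw [h4]
  have hl : 1 / lam = 2 * (1 / (2 * lam)) := by
    field_simp
  rw [hl]
  set c := 1 / (2 * lam) with hc
  have e2 : c * ‖v - s‖ ^ 2 = c * ‖v - p‖ ^ 2 - 2 * (c * ⟪s - p, v - p⟫) + c * ‖p - s‖ ^ 2 := by
    rw [h2, h5]; ring
  have e3 : η * ‖v‖ ^ 2 = η * ‖p‖ ^ 2 + 2 * (η * ⟪p, v - p⟫) + η * ‖v - p‖ ^ 2 := by
    rw [h3]; ring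
  have e4 : η * ⟪p, v - p⟫ = η * ⟪p, v - p⟫ := rfl
  linarith [h1, e2, e3]

lemma zz_step (J : E → ℝ) (η L : ℝ) (hη : 0 < η)
    (hJ3 : ∀ v ξ : E, ξ ∈ fsub J v → ‖ξ‖ ≤ L * (J v + 1))
    (lam : ℝ) (hlam : 0 < lam) (s s' p p' : E)
    (hp : ∀ v : E, J p + η * ‖p‖ ^ 2 + (1 / (2 * lam)) * ‖p - s‖ ^ 2 ≤
      J v + η * ‖v‖ ^ 2 + (1 / (2 * lam)) * ‖v - s‖ ^ 2)
    (hp' : ∀ v : E, J p' + η * ‖p'‖ ^ 2 + (1 / (2 * lam)) * ‖p' - s'‖ ^ 2 ≤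
      J v + η * ‖v‖ ^ 2 + (1 / (2 * lam)) * ‖v - s'‖ ^ 2) :
    J p' + η * ‖p'‖ ^ 2 + (1 / (2 * lam)) * ‖p' - s'‖ ^ 2 - η * ‖s'‖ ^ 2 ≤
      (J p + η * ‖p‖ ^ 2 + (1 / (2 * lam)) * ‖p - s‖ ^ 2 - η * ‖s‖ ^ 2)
      + L * (J p + 1) * ‖s' - s‖ + 2 * η * (‖p - s‖ * ‖s' - s‖)
      + (1 / (2 * lam)) * ‖s' - s‖ ^ 2 := by
  have key := hp' p
  set c := 1 / (2 * lam) with hc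
  have hcpos : 0 < c := by positivity
  -- ‖p - s'‖² = ‖p - s‖² - 2⟪p - s, s' - s⟫ + ‖s' - s‖²
  have h2 : ‖p - s'‖ ^ 2 = ‖p - s‖ ^ 2 - 2 * ⟪p - s, s' - s⟫ + ‖s' - s‖ ^ 2 := by
    have h : p - s' = (p - s) - (s' - s) := by abel
    rw [h, norm_sub_sq_real]
  -- ‖s'‖² = ‖s‖² + 2⟪s, s' - s⟫ + ‖s' - s‖²
  have h3 : ‖s'‖ ^ 2 = ‖s‖ ^ 2 + 2 * ⟪s, s' - s⟫ + ‖s' - s‖ ^ 2 := by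
    have h : s' = s + (s' - s) := by abel
    rw [h, norm_add_sq_real]
    have h' : s + (s' - s) - s = s' - s := by abel
    rw [h']
  -- subgradient bound
  have hb := zz_prox_subgrad (E := E) J η L hJ3 lam hlam s p hp
  have hcs : ⟪(1 / lam) • (s - p) - (2 * η) • p, s' - s⟫ ≤ L * (J p + 1) * ‖s' - s‖ := by
    calc ⟪(1 / lam) • (s - p) - (2 * η) • p, s' - s⟫
        ≤ ‖(1 / lam) • (s - p) - (2 * η) • p‖ * ‖s' - s‖ := real_inner_le_norm _ _
    _ ≤ L * (J p + 1) * ‖s' - s‖ := mul_le_mul_of_nonneg_right hb (norm_nonneg _)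
  have h4 : ⟪(1 / lam) • (s - p) - (2 * η) • p, s' - s⟫
      = 2 * (c * ⟪s - p, s' - s⟫) - 2 * η * ⟪p, s' - s⟫ := by
    rw [inner_sub_left, real_inner_smul_left, real_inner_smul_left]
    have hl : 1 / lam = 2 * c := by rw [hc]; field_simp
    rw [hl]; ring
  have h5 : ⟪p - s, s' - s⟫ = -⟪s - p, s' - s⟫ := by
    rw [show p - s = -(s - p) by abel, inner_neg_left]
  have h6 : ⟪p - s, s' - s⟫ - ⟪s, s' - s⟫ + ⟪s - p, s' - s⟫ = -⟪s, s' - s⟫ := by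
    rw [h5]; ring
  have hcs2 : 2 * η * ⟪p - s, s' - s⟫ ≤ 2 * η * (‖p - s‖ * ‖s' - s‖) := by
    have := real_inner_le_norm (p - s) (s' - s)
    nlinarith
  have e2 : c * ‖p - s'‖ ^ 2 = c * ‖p - s‖ ^ 2 - 2 * (c * ⟪p - s, s' - s⟫) + c * ‖s' - s‖ ^ 2 := by
    rw [h2]; ring
  have e3 : η * ‖s'‖ ^ 2 = η * ‖s‖ ^ 2 + 2 * (η * ⟪s, s' - s⟫) + η * ‖s' - s‖ ^ 2 := by
    rw [h3]; ring
  have e5 : c * ⟪p - s, s' - s⟫ = -(c * ⟪s - p, s' - s⟫) := by rw [h5]; ring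
  have hdrop : 0 ≤ η * ‖s' - s‖ ^ 2 := by positivity
  have hinner : 2 * η * ⟪p, s' - s⟫ - 2 * (η * ⟪s, s' - s⟫) = 2 * η * ⟪p - s, s' - s⟫ := by
    rw [inner_sub_left]; ring
  linarith [key, e2, e3, hcs, hcs2]

/-- The key Moreau–Yosida chain estimate at scale `n`. -/
lemma zz_chain (J : E → ℝ) (η L : ℝ) (hη : 0 < η) (hL : 0 < L)
    (hJnonneg : ∀ v, 0 ≤ J v)
    (hJ3 : ∀ v ξ : E, ξ ∈ fsub J v → ‖ξ‖ ≤ L * (J v + 1))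
    (hlsc : LowerSemicontinuous J)
    (x w : E) (hw : w ≠ 0) (n : ℕ) :
    ∃ q : E, ‖q - (x + w)‖ ^ 2 ≤ 2 * (1/((n:ℝ)+1)) * (J (x+w) + η * ‖x+w‖^2) ∧
      J q + η * ‖q‖ ^ 2 - η * ‖x+w‖^2 ≤
        (J x + (‖w‖*(L + Real.sqrt (1/((n:ℝ)+1)) *
            (L*(2*Real.sqrt 2*η*(‖x‖+‖w‖) + 2*η) + 2*Real.sqrt 2*η)*(η*(‖x‖+‖w‖)^2+1))
            + (1/((n:ℝ)+1))*‖w‖^2/2) /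
          (‖w‖*(L + Real.sqrt (1/((n:ℝ)+1)) *
            (L*(2*Real.sqrt 2*η*(‖x‖+‖w‖) + 2*η) + 2*Real.sqrt 2*η))))
          * Real.exp (‖w‖*(L + Real.sqrt (1/((n:ℝ)+1)) *
            (L*(2*Real.sqrt 2*η*(‖x‖+‖w‖) + 2*η) + 2*Real.sqrt 2*η)))
        - (‖w‖*(L + Real.sqrt (1/((n:ℝ)+1)) *
            (L*(2*Real.sqrt 2*η*(‖x‖+‖w‖) + 2*η) + 2*Real.sqrt 2*η)*(η*(‖x‖+‖w‖)^2+1))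
            + (1/((n:ℝ)+1))*‖w‖^2/2) /
          (‖w‖*(L + Real.sqrt (1/((n:ℝ)+1)) *
            (L*(2*Real.sqrt 2*η*(‖x‖+‖w‖) + 2*η) + 2*Real.sqrt 2*η))) := by
  have hwn : 0 < ‖w‖ := norm_pos_iff.2 hw
  have hsqrt2 : 0 ≤ Real.sqrt 2 := Real.sqrt_nonneg 2
  obtain ⟨R, hR⟩ : ∃ r : ℝ, r = ‖x‖ + ‖w‖ := ⟨_, rfl⟩
  have hR0 : 0 ≤ R := by rw [hR]; positivity
  obtain ⟨lam, hlamdef⟩ : ∃ r : ℝ, r = 1/((n:ℝ)+1) := ⟨_, rfl⟩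
  have hlam : 0 < lam := by rw [hlamdef]; positivity
  have hlam1 : lam ≤ 1 := by
    rw [hlamdef, div_le_one (by positivity)]
    linarith [Nat.cast_nonneg (α := ℝ) n]
  obtain ⟨σ, hσdef⟩ : ∃ r : ℝ, r = Real.sqrt lam := ⟨_, rfl⟩
  have hσ : 0 ≤ σ := by rw [hσdef]; exact Real.sqrt_nonneg _
  have hσsq : σ ^ 2 = lam := by rw [hσdef]; exact Real.sq_sqrt hlam.le
  have hσ1 : σ ≤ 1 := by
    rw [hσdef, show (1:ℝ) = Real.sqrt 1 by simp]
    exact Real.sqrt_le_sqrt hlam1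
  have hlamσ : lam ≤ σ := by nlinarith
  obtain ⟨C₂, hC₂def⟩ : ∃ r : ℝ, r = 2*Real.sqrt 2*η*R + 2*η := ⟨_, rfl⟩
  have hC₂ : 0 ≤ C₂ := by rw [hC₂def]; positivity
  obtain ⟨C₁, hC₁def⟩ : ∃ r : ℝ, r = L*C₂ + 2*Real.sqrt 2*η := ⟨_, rfl⟩
  have hC₁ : 0 ≤ C₁ := by
    rw [hC₁def]
    have : 0 ≤ L*C₂ := mul_nonneg hL.le hC₂
    positivity
  obtain ⟨c, hcdef⟩ : ∃ r : ℝ, r = ‖w‖*(L + σ*C₁) := ⟨_, rfl⟩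
  have hσC₁ : 0 ≤ σ*C₁ := mul_nonneg hσ hC₁
  have hc : 0 < c := by
    rw [hcdef]
    have : 0 < L + σ*C₁ := by linarith
    positivity
  obtain ⟨bb, hbbdef⟩ : ∃ r : ℝ, r = lam*‖w‖^2/2 := ⟨_, rfl⟩
  have hbb : 0 ≤ bb := by rw [hbbdef]; positivity
  obtain ⟨aa, haadef⟩ : ∃ r : ℝ, r = ‖w‖*(L + σ*C₁*(η*R^2+1)) := ⟨_, rfl⟩
  have haa : 0 ≤ aa := by
    rw [haadef]
    have h2 : 0 ≤ η*R^2+1 := by positivity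
    have h3 : 0 ≤ σ*C₁*(η*R^2+1) := by positivity
    have : 0 ≤ L + σ*C₁*(η*R^2+1) := by linarith
    positivity
  obtain ⟨β, hβdef⟩ : ∃ r : ℝ, r = (aa + bb)/c := ⟨_, rfl⟩
  have hβ : 0 ≤ β := by rw [hβdef]; exact div_nonneg (by linarith) hc.le
  obtain ⟨N, hNdef⟩ : ∃ m : ℕ, m = (n+1)^2 := ⟨_, rfl⟩
  have hN0 : 0 < N := by rw [hNdef]; positivity
  have hNR : (0:ℝ) < (N:ℝ) := by exact_mod_cast hN0
  obtain ⟨h, hhdef⟩ : ∃ r : ℝ, r = 1/(N:ℝ) := ⟨_, rfl⟩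
  have hh : 0 < h := by rw [hhdef]; positivity
  have hNcast : (N:ℝ) = ((n:ℝ)+1)^2 := by rw [hNdef]; push_cast; ring
  have hhlam : h = lam^2 := by
    rw [hhdef, hNcast, hlamdef, div_pow, one_pow]
  have hNh : (N:ℝ) * h = 1 := by
    rw [hhdef]; field_simp
  obtain ⟨s, hsdef⟩ : ∃ g : ℕ → E, g = fun k : ℕ => x + (((k:ℝ) * h)) • w := ⟨_, rfl⟩
  -- minimizers
  have hex : ∀ k : ℕ, ∃ p : E, ∀ v : E,
      J p + η * ‖p‖ ^ 2 + (1 / (2 * lam)) * ‖p - s k‖ ^ 2 ≤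
      J v + η * ‖v‖ ^ 2 + (1 / (2 * lam)) * ‖v - s k‖ ^ 2 := by
    intro k
    have hcont : Continuous (fun v : E => η * ‖v‖ ^ 2 + (1 / (2 * lam)) * ‖v - s k‖ ^ 2) := by
      continuity
    have hg : LowerSemicontinuous (fun v : E =>
        J v + η * ‖v‖ ^ 2 + (1 / (2 * lam)) * ‖v - s k‖ ^ 2) := by
      have h2 := hlsc.add hcont.lowerSemicontinuous
      simpa only [add_assoc] using h2
    apply zz_exists_min η hη _ hg
    intro v
    have h1 : 0 ≤ (1 / (2 * lam)) * ‖v - s k‖ ^ 2 := by positivity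
    have h2 := hJnonneg v
    nlinarith
  choose p hp using hex
  obtain ⟨φ, hφdef⟩ : ∃ g : ℕ → ℝ, g = fun k =>
    J (p k) + η * ‖p k‖ ^ 2 + (1 / (2 * lam)) * ‖p k - s k‖ ^ 2 - η * ‖s k‖ ^ 2 := ⟨_, rfl⟩
  have hφk : ∀ k, φ k =
      J (p k) + η * ‖p k‖ ^ 2 + (1 / (2 * lam)) * ‖p k - s k‖ ^ 2 - η * ‖s k‖ ^ 2 := by
    intro k; rw [hφdef]
  have hsnorm : ∀ k : ℕ, k ≤ N → ‖s k‖ ≤ R := by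
    intro k hk
    have h1 : ‖s k‖ ≤ ‖x‖ + ‖(((k:ℝ) * h)) • w‖ := by
      rw [hsdef]; exact norm_add_le _ _
    have h2 : ‖(((k:ℝ) * h)) • w‖ = ((k:ℝ)*h) * ‖w‖ := by
      rw [norm_smul, Real.norm_eq_abs, abs_of_nonneg (by positivity)]
    have h3 : (k:ℝ) * h ≤ 1 := by
      rw [hhdef, mul_one_div, div_le_one hNR]
      exact_mod_cast hk
    have h4 : ((k:ℝ)*h) * ‖w‖ ≤ 1 * ‖w‖ :=
      mul_le_mul_of_nonneg_right h3 (norm_nonneg w)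
    rw [hR]; rw [h2] at h1; linarith
  have hsksq : ∀ k : ℕ, k ≤ N → η * ‖s k‖^2 ≤ η * R^2 := by
    intro k hk
    have h2 := hsnorm k hk
    have hsq : ‖s k‖^2 ≤ R^2 := by nlinarith [norm_nonneg (s k)]
    nlinarith
  have hφpos : ∀ k : ℕ, 0 ≤ φ k + η * ‖s k‖ ^ 2 := by
    intro k
    have h1 : 0 ≤ (1 / (2 * lam)) * ‖p k - s k‖ ^ 2 := by positivity
    have h2 := hJnonneg (p k)
    have h3 : 0 ≤ η * ‖p k‖^2 := by positivity
    rw [hφk k]; linarith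
  have hPpos : ∀ k : ℕ, k ≤ N → 0 ≤ φ k + η * R ^ 2 := by
    intro k hk
    have h1 := hφpos k
    have h3 := hsksq k hk
    have h4 : 0 ≤ η * ‖s k‖^2 := by positivity
    linarith
  -- D bounds
  have hDsq : ∀ k : ℕ, k ≤ N → ‖p k - s k‖ ^ 2 ≤ 2 * lam * (φ k + η * R ^ 2) := by
    intro k hk
    have h1 : (1 / (2*lam)) * ‖p k - s k‖ ^ 2 ≤ φ k + η * ‖s k‖^2 := by
      have h2 := hJnonneg (p k)
      have h3 : 0 ≤ η * ‖p k‖^2 := by positivity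
      rw [hφk k]; linarith
    have h4 : (1 / (2*lam)) * ‖p k - s k‖ ^ 2 ≤ φ k + η * R^2 := by
      have h5 := hsksq k hk
      linarith
    have h6 : (2*lam) * ((1 / (2*lam)) * ‖p k - s k‖ ^ 2) ≤ (2*lam) * (φ k + η * R^2) :=
      mul_le_mul_of_nonneg_left h4 (by linarith)
    have h7 : (2*lam) * ((1 / (2*lam)) * ‖p k - s k‖ ^ 2) = ‖p k - s k‖ ^ 2 := by
      field_simp
    linarith [h6, h7.symm.le, h7.le]
  have hD : ∀ k : ℕ, k ≤ N → ‖p k - s k‖ ≤ Real.sqrt 2 * σ * ((φ k + η*R^2) + 1) ∧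
      ‖p k - s k‖^2 ≤ 2 * σ * ((φ k + η*R^2) + 1) := by
    intro k hk
    have hP : 0 ≤ φ k + η*R^2 := hPpos k hk
    have hD0 : 0 ≤ ‖p k - s k‖ := norm_nonneg _
    have h1 : ‖p k - s k‖^2 ≤ 2 * lam * (φ k + η*R^2) := hDsq k hk
    constructor
    · have h2 : ‖p k - s k‖ ≤ Real.sqrt (2 * lam * (φ k + η*R^2)) := by
        rw [show ‖p k - s k‖ = Real.sqrt (‖p k - s k‖^2) by rw [Real.sqrt_sq hD0]]
        exact Real.sqrt_le_sqrt h1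
      have h3 : Real.sqrt (2 * lam * (φ k + η*R^2)) = Real.sqrt 2 * σ * Real.sqrt (φ k + η*R^2) := by
        rw [hσdef, ← Real.sqrt_mul (by norm_num : (0:ℝ) ≤ 2), ← Real.sqrt_mul (by positivity)]
      have h4 : Real.sqrt (φ k + η*R^2) ≤ (φ k + η*R^2) + 1 := by
        nlinarith [Real.sq_sqrt hP, Real.sqrt_nonneg (φ k + η*R^2)]
      have h5 : 0 ≤ Real.sqrt 2 * σ := by positivity
      calc ‖p k - s k‖ ≤ Real.sqrt 2 * σ * Real.sqrt (φ k + η*R^2) := by rw [← h3]; exact h2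
      _ ≤ Real.sqrt 2 * σ * ((φ k + η*R^2) + 1) := mul_le_mul_of_nonneg_left h4 h5
    · calc ‖p k - s k‖^2 ≤ 2 * lam * (φ k + η*R^2) := h1
      _ ≤ 2 * σ * ((φ k + η*R^2)+1) := by nlinarith
  -- per-step recursion
  have hrec : ∀ k : ℕ, k + 1 ≤ N → φ (k+1) + β ≤ (1 + h*c) * (φ k + β) := by
    intro k hk
    have hkN : k ≤ N := by omega
    have hks : ‖s (k+1) - s k‖ = h * ‖w‖ := by
      have h1 : s (k+1) - s k = h • w := by
        rw [hsdef]
        show x + ((((k+1:ℕ)):ℝ) * h) • w - (x + ((k:ℝ) * h) • w) = h • w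
        rw [show ((((k+1:ℕ)):ℝ) * h) = (k:ℝ)*h + h by push_cast; ring, add_smul]
        abel
      rw [h1, norm_smul, Real.norm_eq_abs, abs_of_nonneg hh.le]
    have hstep := zz_step J η L hη hJ3 lam hlam (s k) (s (k+1)) (p k) (p (k+1))
      (hp k) (hp (k+1))
    rw [hks, ← hφk k] at hstep
    rw [show J (p (k+1)) + η * ‖p (k+1)‖ ^ 2 + 1 / (2 * lam) * ‖p (k+1) - s (k+1)‖ ^ 2
        - η * ‖s (k+1)‖ ^ 2 = φ (k+1) from (hφk (k+1)).symm] at hstep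
    obtain ⟨hD1, hD2⟩ := hD k hkN
    have hP : 0 ≤ φ k + η*R^2 := hPpos k hkN
    have hD0 : 0 ≤ ‖p k - s k‖ := norm_nonneg _
    -- J (p k) + 1 ≤ (φ k + 1) + η*(2R+D)*D
    have hJp : J (p k) + 1 ≤ (φ k + 1) + η*(2*R+‖p k - s k‖)*‖p k - s k‖ := by
      have h1 : J (p k) + η * ‖p k‖^2 ≤ φ k + η * ‖s k‖^2 := by
        have h2 : 0 ≤ (1 / (2*lam)) * ‖p k - s k‖ ^ 2 := by positivity
        rw [hφk k]; linarith
      have h2 : ‖s k‖ - ‖p k‖ ≤ ‖p k - s k‖ := by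
        have h3 := norm_sub_norm_le (s k) (p k)
        rw [norm_sub_rev (s k) (p k)] at h3
        linarith
      have h3 : ‖p k‖ ≤ ‖s k‖ + ‖p k - s k‖ := by
        have h4 := norm_sub_norm_le (p k) (s k)
        linarith
      have h4 : ‖s k‖ ≤ R := hsnorm k hkN
      have h5 : ‖s k‖^2 - ‖p k‖^2 ≤ (2*R + ‖p k - s k‖)*‖p k - s k‖ := by
        have h6 : (‖s k‖ - ‖p k‖) * (‖s k‖ + ‖p k‖) ≤ ‖p k - s k‖ * (‖s k‖ + ‖p k‖) :=
          mul_le_mul_of_nonneg_right h2 (by positivity)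
        have h7 : ‖s k‖ + ‖p k‖ ≤ 2*R + ‖p k - s k‖ := by linarith
        have h8 : ‖p k - s k‖ * (‖s k‖ + ‖p k‖) ≤ ‖p k - s k‖ * (2*R + ‖p k - s k‖) :=
          mul_le_mul_of_nonneg_left h7 hD0
        have h9 : (‖s k‖ - ‖p k‖) * (‖s k‖ + ‖p k‖) = ‖s k‖^2 - ‖p k‖^2 := by ring
        have h10 : ‖p k - s k‖ * (2*R + ‖p k - s k‖) = (2*R + ‖p k - s k‖)*‖p k - s k‖ := by ring
        linarith
      have h15 := mul_le_mul_of_nonneg_left h5 hη.le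
      have h16 : η*(‖s k‖^2 - ‖p k‖^2) = η*‖s k‖^2 - η*‖p k‖^2 := by ring
      have h17 : η*((2*R + ‖p k - s k‖)*‖p k - s k‖) = η*(2*R+‖p k - s k‖)*‖p k - s k‖ := by ring
      linarith
    -- bound the increment terms
    have hw0 : 0 ≤ h * ‖w‖ := by positivity
    have e2 : η*(2*R+‖p k - s k‖)*‖p k - s k‖ ≤ σ*((φ k + η*R^2)+1)*C₂ := by
      have b1 : (2*η*R) * ‖p k - s k‖ ≤ (2*η*R) * (Real.sqrt 2 * σ * ((φ k + η*R^2)+1)) :=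
        mul_le_mul_of_nonneg_left hD1 (by positivity)
      have b2 : η * ‖p k - s k‖^2 ≤ η * (2 * σ * ((φ k + η*R^2)+1)) :=
        mul_le_mul_of_nonneg_left hD2 hη.le
      have hb5 : η*(2*R+‖p k - s k‖)*‖p k - s k‖ = (2*η*R) * ‖p k - s k‖ + η * ‖p k - s k‖^2 := by ring
      have hb6 : (2*η*R) * (Real.sqrt 2 * σ * ((φ k + η*R^2)+1)) + η * (2 * σ * ((φ k + η*R^2)+1))
          = σ*((φ k + η*R^2)+1)*(2*Real.sqrt 2*η*R + 2*η) := by ring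
      rw [hC₂def]; linarith [b1, b2]
    have e3 : L * (J (p k) + 1) ≤ L*(φ k + 1) + L*(σ*((φ k + η*R^2)+1)*C₂) := by
      have h10 : J (p k) + 1 ≤ (φ k + 1) + σ*((φ k + η*R^2)+1)*C₂ := by linarith
      have h11 := mul_le_mul_of_nonneg_left h10 hL.le
      have h12 : L * ((φ k + 1) + σ*((φ k + η*R^2)+1)*C₂)
          = L*(φ k + 1) + L*(σ*((φ k + η*R^2)+1)*C₂) := by ring
      linarith
    have e3' : L * (J (p k) + 1) * (h*‖w‖) ≤
        (L*(φ k + 1) + L*(σ*((φ k + η*R^2)+1)*C₂)) * (h*‖w‖) :=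
      mul_le_mul_of_nonneg_right e3 hw0
    have e4 : 2*η*(‖p k - s k‖ * (h*‖w‖)) ≤ 2*Real.sqrt 2*η*(σ*((φ k + η*R^2)+1)) * (h*‖w‖) := by
      have b3 : (2*η) * ‖p k - s k‖ ≤ (2*η) * (Real.sqrt 2 * σ * ((φ k + η*R^2)+1)) :=
        mul_le_mul_of_nonneg_left hD1 (by positivity)
      have b4 := mul_le_mul_of_nonneg_right b3 hw0
      have h13 : 2*η*(‖p k - s k‖*(h*‖w‖)) = (2*η) * ‖p k - s k‖ * (h*‖w‖) := by ring
      have h14 : 2*Real.sqrt 2*η*(σ*((φ k + η*R^2)+1)) * (h*‖w‖)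
          = (2*η) * (Real.sqrt 2 * σ * ((φ k + η*R^2)+1)) * (h*‖w‖) := by ring
      linarith
    have e5 : (1 / (2*lam)) * (h*‖w‖)^2 = h * bb := by
      rw [hbbdef, hhlam]; field_simp
    -- combine
    have key : φ (k+1) ≤ φ k + (L*(φ k + 1) + σ*C₁*((φ k + η*R^2)+1)) * (h*‖w‖) + h*bb := by
      have e9 : (L*(φ k + 1) + L*(σ*((φ k + η*R^2)+1)*C₂)) * (h*‖w‖)
          + 2*Real.sqrt 2*η*(σ*((φ k + η*R^2)+1)) * (h*‖w‖)
          = (L*(φ k + 1) + σ*C₁*((φ k + η*R^2)+1)) * (h*‖w‖) := by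
        rw [hC₁def]; ring
      linarith [hstep, e3', e4, e5.le, e5.ge, e9.le, e9.ge]
    have e7 : (L*(φ k + 1) + σ*C₁*((φ k + η*R^2)+1)) * (h*‖w‖) = h*c*(φ k) + h*aa := by
      rw [hcdef, haadef]; ring
    have e8 : h*c*β = h*(aa+bb) := by
      rw [hβdef]; field_simp
    linarith [key, e7.le, e7.ge, e8.le, e8.ge]
  -- iterate
  have hiter : ∀ k : ℕ, k ≤ N → φ k + β ≤ (1 + h*c)^k * (φ 0 + β) := by
    intro k
    induction k with
    | zero => intro _; simp
    | succ m ih =>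
      intro hm
      have h1 := hrec m hm
      have h2 := ih (by omega)
      have h3 : (0:ℝ) ≤ 1 + h*c := by positivity
      calc φ (m+1) + β ≤ (1 + h*c) * (φ m + β) := h1
      _ ≤ (1 + h*c) * ((1 + h*c)^m * (φ 0 + β)) := mul_le_mul_of_nonneg_left h2 h3
      _ = (1 + h*c)^(m+1) * (φ 0 + β) := by ring
  -- φ 0 ≤ J x
  have hs0 : s 0 = x := by
    rw [hsdef]
    show x + (((0:ℕ):ℝ) * h) • w = x
    norm_num
  have hφ0 : φ 0 ≤ J x := by
    have h1 := hp 0 x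
    rw [hs0] at h1
    have h2 : ‖x - x‖ ^ 2 = (0:ℝ) := by simp
    rw [h2, mul_zero, add_zero] at h1
    rw [hφk 0, hs0]
    linarith
  have hsN : s N = x + w := by
    rw [hsdef]
    show x + (((N:ℕ):ℝ) * h) • w = x + w
    rw [hNh, one_smul]
  have hfinal : φ N + β ≤ (J x + β) * Real.exp c := by
    have h1 := hiter N (le_refl N)
    have h3 : (1 + h*c) ≤ Real.exp (h*c) := by linarith [Real.add_one_le_exp (h*c)]
    have h4 : (0:ℝ) ≤ 1 + h*c := by positivity
    have h2 : (1 + h*c)^N ≤ Real.exp c := by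
      calc (1 + h*c)^N ≤ (Real.exp (h*c))^N := pow_le_pow_left₀ h4 h3 N
      _ = Real.exp ((N:ℝ)*(h*c)) := by rw [← Real.exp_nat_mul]
      _ = Real.exp c := by rw [show (N:ℝ)*(h*c) = ((N:ℝ)*h)*c by ring, hNh, one_mul]
    rcases le_or_gt 0 (φ 0 + β) with hsign | hsign
    · have h5 : (1 + h*c)^N * (φ 0 + β) ≤ Real.exp c * (φ 0 + β) :=
        mul_le_mul_of_nonneg_right h2 hsign
      have h6 : Real.exp c * (φ 0 + β) ≤ Real.exp c * (J x + β) :=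
        mul_le_mul_of_nonneg_left (by linarith) (Real.exp_pos c).le
      have h7 : Real.exp c * (J x + β) = (J x + β) * Real.exp c := by ring
      linarith
    · have h6 : 1 ≤ (1 + h*c)^N := one_le_pow₀ (by nlinarith : (1:ℝ) ≤ 1 + h*c)
      have h5 : (1 + h*c)^N * (φ 0 + β) ≤ φ 0 + β := by nlinarith [h6, hsign]
      have h7 : 0 ≤ (J x + β) * Real.exp c :=
        mul_nonneg (by linarith [hJnonneg x]) (Real.exp_pos c).le
      linarith
  -- conclusion
  refine ⟨p N, ?_, ?_⟩
  · have h1 := hp N (x + w)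
    rw [hsN] at h1
    have h2 : ‖x + w - (x+w)‖ ^ 2 = (0:ℝ) := by simp
    rw [h2, mul_zero, add_zero] at h1
    have h3 : (1/(2*lam)) * ‖p N - (x+w)‖^2 ≤ J (x+w) + η*‖x+w‖^2 := by
      have h4 := hJnonneg (p N)
      have h5 : 0 ≤ η * ‖p N‖^2 := by positivity
      linarith
    have h6 : (2*lam) * ((1/(2*lam)) * ‖p N - (x+w)‖^2) ≤ (2*lam) * (J (x+w) + η*‖x+w‖^2) :=
      mul_le_mul_of_nonneg_left h3 (by linarith)
    have h7 : (2*lam) * ((1/(2*lam)) * ‖p N - (x+w)‖^2) = ‖p N - (x+w)‖^2 := by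
      field_simp
    rw [← hlamdef]
    have h8 : (2*lam) * (J (x+w) + η*‖x+w‖^2) = 2*lam*(J (x+w) + η*‖x+w‖^2) := by ring
    linarith
  · have h1 : J (p N) + η * ‖p N‖^2 - η*‖x+w‖^2 ≤ φ N := by
      rw [hφk N, hsN]
      have h2 : 0 ≤ (1/(2*lam)) * ‖p N - (x+w)‖^2 := by positivity
      linarith
    have h3 : J (p N) + η * ‖p N‖^2 - η*‖x+w‖^2 ≤ (J x + β) * Real.exp c - β := by
      linarith
    rw [hβdef, haadef, hbbdef, hcdef, hC₁def, hC₂def, hσdef, hlamdef, hR] at h3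
    exact h3

/-- The shift lemma: Gronwall bound for `J` along a shift. -/
lemma zz_shift (J : E → ℝ) (η L : ℝ) (hη : 0 < η) (hL : 0 < L)
    (hJnonneg : ∀ v, 0 ≤ J v)
    (hJ3 : ∀ v ξ : E, ξ ∈ fsub J v → ‖ξ‖ ≤ L * (J v + 1))
    (hlsc : LowerSemicontinuous J) (x w : E) :
    J (x + w) + 1 ≤ (J x + 1) * Real.exp (L * ‖w‖) := by
  rcases eq_or_ne w 0 with hw | hw
  · rw [hw]
    simp only [add_zero, norm_zero, mul_zero, Real.exp_zero, mul_one]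
    exact le_refl _
  · have hwn : 0 < ‖w‖ := norm_pos_iff.2 hw
    choose q hq1 hq2 using fun n => zz_chain J η L hη hL hJnonneg hJ3 hlsc x w hw n
    -- abbreviations
    obtain ⟨K1, hK1⟩ : ∃ r : ℝ, r = L*(2*Real.sqrt 2*η*(‖x‖+‖w‖) + 2*η) + 2*Real.sqrt 2*η :=
      ⟨_, rfl⟩
    obtain ⟨K2, hK2⟩ : ∃ r : ℝ, r = η*(‖x‖+‖w‖)^2+1 := ⟨_, rfl⟩
    have hK1n : 0 ≤ K1 := by
      rw [hK1]
      have h2 : 0 ≤ Real.sqrt 2 := Real.sqrt_nonneg 2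
      have : 0 ≤ ‖x‖ + ‖w‖ := by positivity
      positivity
    -- the sequences
    set lamn : ℕ → ℝ := fun n => 1/((n:ℝ)+1) with hlamn
    set cn : ℕ → ℝ := fun n => ‖w‖*(L + Real.sqrt (lamn n) * K1) with hcn
    set an : ℕ → ℝ := fun n => ‖w‖*(L + Real.sqrt (lamn n) * K1 * K2) + (lamn n)*‖w‖^2/2
      with han
    set βn : ℕ → ℝ := fun n => an n / cn n with hβn
    have hlam0 : Tendsto lamn atTop (𝓝 0) := tendsto_one_div_add_atTop_nhds_zero_nat
    have hsq0 : Tendsto (fun n => Real.sqrt (lamn n)) atTop (𝓝 0) := by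
      have := (Real.continuous_sqrt.tendsto 0).comp hlam0
      simpa [Function.comp_def] using this
    have hcL : Tendsto cn atTop (𝓝 (‖w‖ * L)) := by
      have h1 : Tendsto (fun n => L + Real.sqrt (lamn n) * K1) atTop (𝓝 (L + 0*K1)) :=
        tendsto_const_nhds.add (hsq0.mul_const K1)
      have h2 := h1.const_mul ‖w‖
      simpa using h2
    have haL : Tendsto an atTop (𝓝 (‖w‖ * L)) := by
      have h1 : Tendsto (fun n => L + Real.sqrt (lamn n) * K1 * K2) atTop (𝓝 (L + 0*K1*K2)) :=
        tendsto_const_nhds.add ((hsq0.mul_const K1).mul_const K2)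
      have h2 : Tendsto (fun n => (lamn n)*‖w‖^2/2) atTop (𝓝 (0*‖w‖^2/2)) :=
        (hlam0.mul_const _).div_const 2
      have h3 := (h1.const_mul ‖w‖).add h2
      simpa using h3
    have hβ1 : Tendsto βn atTop (𝓝 1) := by
      have h1 : (‖w‖ * L) ≠ 0 := by positivity
      have := haL.div hcL h1
      rw [div_self h1] at this
      exact this
    have hRHS : Tendsto (fun n => (J x + βn n) * Real.exp (cn n) - βn n) atTop
        (𝓝 ((J x + 1) * Real.exp (‖w‖ * L) - 1)) := by
      have h1 : Tendsto (fun n => Real.exp (cn n)) atTop (𝓝 (Real.exp (‖w‖*L))) :=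
        (Real.continuous_exp.tendsto _).comp hcL
      exact ((tendsto_const_nhds.add hβ1).mul h1).sub hβ1
    -- lower bound eventually
    have hmain : ∀ ε : ℝ, 0 < ε →
        J (x + w) - ε ≤ (J x + 1) * Real.exp (‖w‖ * L) - 1 := by
      intro ε hε
      -- lsc of Jη at x + w
      have hJη : LowerSemicontinuous (fun v : E => J v + η * ‖v‖^2) := by
        have hcont : Continuous (fun v : E => η * ‖v‖^2) :=
          continuous_const.mul (continuous_norm.pow 2)
        exact hlsc.add hcont.lowerSemicontinuous
      have h1 : ∀ᶠ v in 𝓝 (x + w), (J (x+w) + η*‖x+w‖^2) - ε < J v + η * ‖v‖^2 :=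
        hJη (x + w) _ (by show _ < J (x+w) + η*‖x+w‖^2; linarith)
      obtain ⟨r, hr, hball⟩ := Metric.eventually_nhds_iff_ball.1 h1
      -- eventually q n in ball
      have h2 : Tendsto (fun n => ‖q n - (x+w)‖^2) atTop (𝓝 0) := by
        have hub : ∀ n, ‖q n - (x+w)‖^2 ≤ 2*(lamn n)*(J (x+w) + η * ‖x+w‖^2) := hq1
        have hlb : ∀ n, 0 ≤ ‖q n - (x+w)‖^2 := fun n => by positivity
        have h3 : Tendsto (fun n => 2*(lamn n)*(J (x+w) + η * ‖x+w‖^2)) atTop (𝓝 0) := by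
          have h3' := (hlam0.const_mul 2).mul_const (J (x+w) + η * ‖x+w‖^2)
          simpa only [mul_zero, zero_mul] using h3'
        exact tendsto_of_tendsto_of_tendsto_of_le_of_le tendsto_const_nhds h3 hlb hub
      have h4 : ∀ᶠ n in atTop, ‖q n - (x+w)‖^2 < r^2 := by
        have := h2.eventually_lt_const (by positivity : (0:ℝ) < r^2)
        exact this
      have h5 : ∀ᶠ n in atTop, J (x+w) - ε ≤ (J x + βn n) * Real.exp (cn n) - βn n := by
        filter_upwards [h4] with n hn
        have h6 : q n ∈ Metric.ball (x+w) r := by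
          rw [Metric.mem_ball, dist_eq_norm]
          nlinarith [norm_nonneg (q n - (x+w)), hr]
        have h7 := hball (q n) h6
        have h8 := hq2 n
        rw [← hK1, ← hK2] at h8
        have h9 : J (x+w) - ε ≤ J (q n) + η*‖q n‖^2 - η*‖x+w‖^2 := by
          have h10 : 0 ≤ η * ‖x+w‖^2 := by positivity
          linarith
      -- conclude
        calc J (x+w) - ε ≤ J (q n) + η*‖q n‖^2 - η*‖x+w‖^2 := h9
        _ ≤ _ := h8
      exact ge_of_tendsto hRHS h5
    have h11 : J (x + w) ≤ (J x + 1) * Real.exp (‖w‖ * L) - 1 := by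
      by_contra hcon
      push_neg at hcon
      have := hmain ((J (x+w) - ((J x + 1) * Real.exp (‖w‖ * L) - 1))/2) (by linarith)
      linarith
    rw [mul_comm ‖w‖ L] at h11
    linarith

lemma zz_psi_bound (ψ : E → ℝ) (hψnn : ∀ v, 0 ≤ ψ v) (hψ0 : ψ 0 = 0)
    (hsub : ∀ v₁ v₂ : E, ψ (v₁ + v₂) ≤ ψ v₁ + ψ v₂)
    (hhom : ∀ c : ℝ, 0 ≤ c → ∀ v : E, ψ (c • v) = c * ψ v) :
    ∃ C : ℝ, 0 ≤ C ∧ ∀ v, ψ v ≤ C * ‖v‖ := by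
  set b := stdOrthonormalBasis ℝ E with hb
  set C : ℝ := ∑ i, (ψ (b i) + ψ (-(b i))) with hC
  have hC0 : 0 ≤ C := Finset.sum_nonneg (fun i _ => by
    have := hψnn (b i); have := hψnn (-(b i)); linarith)
  refine ⟨C, hC0, fun v => ?_⟩
  have hsum : ∀ (t : Finset (Fin (Module.finrank ℝ E))) (g : Fin (Module.finrank ℝ E) → E),
      ψ (∑ i ∈ t, g i) ≤ ∑ i ∈ t, ψ (g i) := by
    intro t
    induction t using Finset.induction with
    | empty => intro g; simp [hψ0]
    | insert a s hni ih =>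
      intro g
      rw [Finset.sum_insert hni, Finset.sum_insert hni]
      calc ψ (g _ + ∑ i ∈ _, g i) ≤ ψ (g _) + ψ (∑ i ∈ _, g i) := hsub _ _
      _ ≤ _ := by linarith [ih g]
  have hterm : ∀ (c : ℝ) (u : E), ψ (c • u) ≤ |c| * (ψ u + ψ (-u)) := by
    intro c u
    rcases le_or_gt 0 c with hc | hc
    · rw [hhom c hc u, abs_of_nonneg hc]
      have := hψnn (-u)
      nlinarith [hψnn u]
    · have h1 : c • u = (-c) • (-u) := by rw [smul_neg, neg_smul, neg_neg]
      rw [h1, hhom (-c) (by linarith) (-u), abs_of_neg hc]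
      nlinarith [hψnn u, hψnn (-u)]
  have hrepr : v = ∑ i, ⟪b i, v⟫ • b i := by
    have := b.sum_repr' v
    exact this.symm
  calc ψ v = ψ (∑ i, ⟪b i, v⟫ • b i) := by rw [← hrepr]
  _ ≤ ∑ i, ψ (⟪b i, v⟫ • b i) := hsum _ _
  _ ≤ ∑ i, ‖v‖ * (ψ (b i) + ψ (-(b i))) := by
      apply Finset.sum_le_sum
      intro i _
      have h1 := hterm ⟪b i, v⟫ (b i)
      have h2 : |⟪b i, v⟫| ≤ ‖v‖ := by
        have h3 := abs_real_inner_le_norm (b i) v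
        have h4 : ‖b i‖ = 1 := b.orthonormal.1 i
        rw [h4, one_mul] at h3
        exact h3
      have h5 : 0 ≤ ψ (b i) + ψ (-(b i)) := by
        have := hψnn (b i); have := hψnn (-(b i)); linarith
      nlinarith
  _ = C * ‖v‖ := by rw [hC, Finset.sum_mul]; congr 1; ext i; ring

end ZZHelpers

section ZZBinv

variable {E F : Type*} [NormedAddCommGroup E] [InnerProductSpace ℝ E] [FiniteDimensional ℝ E]
  [NormedAddCommGroup F] [InnerProductSpace ℝ F] [FiniteDimensional ℝ F]

lemma zz_binv (A : E →ₗ[ℝ] F) (γ : ℝ) (hγ : 0 < γ)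
    (hAγ : ∀ q : F, γ * ‖q‖ ≤ ‖LinearMap.adjoint A q‖) :
    ∃ B : F → E, ∀ q, A (B q) = q ∧ ‖B q‖ ≤ ‖q‖ / γ := by
  set Aad := LinearMap.adjoint A with hAad
  set T := A ∘ₗ Aad with hT
  have hinj : Function.Injective T := by
    intro p₁ p₂ hp
    have h1 : T (p₁ - p₂) = 0 := by rw [map_sub, hp, sub_self]
    have h2 : ‖Aad (p₁ - p₂)‖^2 = ⟪p₁ - p₂, T (p₁ - p₂)⟫ := by
      rw [← real_inner_self_eq_norm_sq]
      rw [hT]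
      exact LinearMap.adjoint_inner_left A (Aad (p₁ - p₂)) (p₁ - p₂)
    rw [h1, inner_zero_right] at h2
    have h3 := hAγ (p₁ - p₂)
    have h4 : ‖Aad (p₁-p₂)‖ = 0 := by nlinarith [norm_nonneg (Aad (p₁-p₂))]
    have h5 : ‖p₁ - p₂‖ = 0 := by nlinarith [norm_nonneg (p₁ - p₂)]
    exact sub_eq_zero.1 (norm_eq_zero.1 h5)
  have hsurj : Function.Surjective T := (LinearMap.injective_iff_surjective).1 hinj
  set e := LinearEquiv.ofBijective T ⟨hinj, hsurj⟩ with he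
  refine ⟨fun q => Aad (e.symm q), fun q => ?_⟩
  have hTq : T (e.symm q) = q := by
    have h1 := e.apply_symm_apply q
    exact h1
  constructor
  · show A (Aad (e.symm q)) = q
    exact hTq
  · set p := e.symm q with hp
    have h2 : ‖Aad p‖^2 = ⟪p, q⟫ := by
      rw [← real_inner_self_eq_norm_sq, ← hTq]
      exact LinearMap.adjoint_inner_left A (Aad p) p
    have h3 : ⟪p, q⟫ ≤ ‖p‖ * ‖q‖ := real_inner_le_norm p q
    have h4 := hAγ p
    have h5 : γ * ‖Aad p‖^2 ≤ ‖Aad p‖ * ‖q‖ := by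
      have h6 : γ * ‖p‖ * ‖q‖ ≤ ‖Aad p‖ * ‖q‖ :=
        mul_le_mul_of_nonneg_right h4 (norm_nonneg q)
      have h7 : γ * ‖Aad p‖^2 = γ * ⟪p, q⟫ := by rw [h2]
      have h8 : γ * ⟪p, q⟫ ≤ γ * (‖p‖ * ‖q‖) := mul_le_mul_of_nonneg_left h3 hγ.le
      calc γ * ‖Aad p‖^2 ≤ γ * (‖p‖*‖q‖) := by rw [h7]; exact h8
      _ = γ * ‖p‖ * ‖q‖ := by ring
      _ ≤ _ := h6
    show ‖Aad p‖ ≤ ‖q‖ / γ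
    rw [le_div_iff₀ hγ]
    rcases eq_or_lt_of_le (norm_nonneg (Aad p)) with h9 | h9
    · rw [← h9, zero_mul]
      exact norm_nonneg q
    · nlinarith

end ZZBinv

/-- Uniform bound for the algorithm-generated evolutions. -/
theorem uniform_bound_for_algorithm_evolutions
    {E F : Type*} [NormedAddCommGroup E] [InnerProductSpace ℝ E] [FiniteDimensional ℝ E]
    [NormedAddCommGroup F] [InnerProductSpace ℝ F] [FiniteDimensional ℝ F]
    (A : E →ₗ[ℝ] F) (hA : Function.Surjective A)
    (γ : ℝ) (hγ : 0 < γ) (hAγ : ∀ q : F, γ * ‖q‖ ≤ ‖LinearMap.adjoint A q‖)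
    (J : E → ℝ) (hJnonneg : ∀ v, 0 ≤ J v)
    (hJ1 : ∀ C : ℝ, Bornology.IsBounded {v : E | J v + ‖A v‖ ^ 2 ≤ C})
    (η : ℝ) (hη : 0 < η) (ν : ℝ) (hν : 0 < ν)
    (hJ2 : ∀ v₁ v₂ ξ₁ ξ₂ : E, ξ₁ ∈ fsub (fun v => J v + η * ‖v‖ ^ 2) v₁ →
      ξ₂ ∈ fsub (fun v => J v + η * ‖v‖ ^ 2) v₂ →
      ν * ‖v₁ - v₂‖ ^ 2 ≤ ⟪ξ₁ - ξ₂, v₁ - v₂⟫)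
    (L : ℝ) (hL : 0 < L)
    (hJ3 : ∀ v ξ : E, ξ ∈ fsub J v → ‖ξ‖ ≤ L * (J v + 1))
    (α : ℝ) (hα : α = 0 ∨ α = 1)
    (ψ : E → ℝ) (hψnonneg : ∀ v, 0 ≤ ψ v)
    (hΨ : α = 1 →
      (∀ v : E, ψ v = 0 ↔ v = 0) ∧
      (∀ v₁ v₂ : E, ψ (v₁ + v₂) ≤ ψ v₁ + ψ v₂) ∧
      (∀ c : ℝ, 0 ≤ c → ∀ v : E, ψ (c • v) = c * ψ v))
    (T : ℝ) (hT : 0 < T)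
    (f f' : ℝ → F)
    (hf'L2 : MemLp f' 2 (volume.restrict (Set.Icc (0 : ℝ) T)))
    (hfFTC : ∀ t ∈ Set.Icc (0 : ℝ) T, f t = f 0 + ∫ s in (0 : ℝ)..t, f' s)
    (v₀ : E) (hv₀ : IsCritPt A (fun v => J v + α * ψ (v - v₀)) (f 0) v₀) :
    ∃ Z₁ : ℝ, 0 < Z₁ ∧
      ∀ δ ∈ Set.Ioo (0 : ℝ) 1, ∀ (vi : ℕ → E) (vseq : ℕ → ℕ → E) (vδ : ℝ → E),
        AlgData J ψ α A η T δ f v₀ vi vseq →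
        AlgEvol T δ v₀ vi vδ →
        ∀ t ∈ Set.Icc (0 : ℝ) T, ‖vδ t‖ ≤ Z₁ := by
  -- preliminaries
  obtain ⟨Bv, hBv⟩ := zz_binv A γ hγ hAγ
  have hlsc := zz_lsc J L hJ3
  have hshift := zz_shift J η L hη hL hJnonneg hJ3 hlsc
  obtain ⟨Cψ, hCψ0, hCψ⟩ : ∃ C : ℝ, 0 ≤ C ∧ ∀ v, α * ψ v ≤ C * ‖v‖ := by
    rcases hα with h0 | h1
    · exact ⟨0, le_refl 0, fun v => by rw [h0, zero_mul, zero_mul]⟩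
    · obtain ⟨h1a, h1b, h1c⟩ := hΨ h1
      obtain ⟨C, hC0, hC⟩ := zz_psi_bound ψ hψnonneg ((h1a 0).2 rfl) h1b h1c
      exact ⟨C, hC0, fun v => by rw [h1, one_mul]; exact hC v⟩
  have hαψnn : ∀ v : E, 0 ≤ α * ψ v := by
    rcases hα with h | h <;> rw [h]
    · intro v; rw [zero_mul]
    · intro v; rw [one_mul]; exact hψnonneg v
  -- integral setup
  haveI hfin : IsFiniteMeasure (volume.restrict (Set.Icc (0:ℝ) T)) := by
    constructor
    rw [Measure.restrict_apply_univ, Real.volume_Icc]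
    exact ENNReal.ofReal_lt_top
  have hfi : IntegrableOn f' (Set.Icc 0 T) volume := hf'L2.integrable one_le_two
  have hii : ∀ a b : ℝ, 0 ≤ a → a ≤ b → b ≤ T → IntervalIntegrable f' volume a b := by
    intro a b ha hab hb
    apply IntegrableOn.intervalIntegrable
    apply hfi.mono_set
    rw [Set.uIcc_of_le hab]
    exact Set.Icc_subset_Icc ha hb
  have hii' : ∀ a b : ℝ, 0 ≤ a → a ≤ b → b ≤ T →
      IntervalIntegrable (fun s => ‖f' s‖) volume a b := by
    intro a b ha hab hb
    apply IntegrableOn.intervalIntegrable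
    have hsub : Set.uIcc a b ⊆ Set.Icc 0 T := by
      rw [Set.uIcc_of_le hab]
      exact Set.Icc_subset_Icc ha hb
    exact IntegrableOn.mono_set hfi.norm hsub
  have hfdiff : ∀ a b : ℝ, 0 ≤ a → a ≤ b → b ≤ T →
      ‖f b - f a‖ ≤ ∫ s in a..b, ‖f' s‖ := by
    intro a b ha hab hb
    have heq : f b - f a = ∫ s in a..b, f' s := by
      rw [hfFTC b ⟨le_trans ha hab, hb⟩, hfFTC a ⟨ha, le_trans hab hb⟩]
      have h2 := intervalIntegral.integral_add_adjacent_intervals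
        (hii 0 a (le_refl 0) ha (le_trans hab hb)) (hii a b ha hab hb)
      rw [← h2]; abel
    rw [heq]
    exact intervalIntegral.norm_integral_le_integral_norm hab
  have hInn : ∀ a b : ℝ, a ≤ b → (0:ℝ) ≤ ∫ s in a..b, ‖f' s‖ := by
    intro a b hab
    exact intervalIntegral.integral_nonneg hab (fun _ _ => norm_nonneg _)
  obtain ⟨M₁, hM₁def⟩ : ∃ r : ℝ, r = ∫ s in (0:ℝ)..T, ‖f' s‖ := ⟨_, rfl⟩
  have hM₁ : 0 ≤ M₁ := by rw [hM₁def]; exact hInn 0 T hT.le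
  have hIadd : ∀ a b : ℝ, 0 ≤ a → a ≤ b → b ≤ T →
      (∫ s in (0:ℝ)..a, ‖f' s‖) + ∫ s in a..b, ‖f' s‖ = ∫ s in (0:ℝ)..b, ‖f' s‖ := by
    intro a b ha hab hb
    exact intervalIntegral.integral_add_adjacent_intervals
      (hii' 0 a (le_refl 0) ha (le_trans hab hb)) (hii' a b ha hab hb)
  have hIle : ∀ b : ℝ, 0 ≤ b → b ≤ T → (∫ s in (0:ℝ)..b, ‖f' s‖) ≤ M₁ := by
    intro b hb hbT
    rw [hM₁def, ← hIadd b T hb hbT (le_refl T)]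
    linarith [hInn b T hbT]
  have hFmax : ∀ t : ℝ, 0 ≤ t → t ≤ T → ‖f t‖ ≤ ‖f 0‖ + M₁ := by
    intro t ht htT
    rw [hfFTC t ⟨ht, htT⟩]
    calc ‖f 0 + ∫ s in (0:ℝ)..t, f' s‖ ≤ ‖f 0‖ + ‖∫ s in (0:ℝ)..t, f' s‖ := norm_add_le _ _
    _ ≤ ‖f 0‖ + ∫ s in (0:ℝ)..t, ‖f' s‖ := by
        linarith [intervalIntegral.norm_integral_le_integral_norm (μ := volume) (f := f') (a := 0) (b := t) ht]
    _ ≤ ‖f 0‖ + M₁ := by linarith [hIle t ht htT]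
  obtain ⟨Fmax, hFmaxdef⟩ : ∃ r : ℝ, r = ‖f 0‖ + M₁ := ⟨_, rfl⟩
  have hFmax0 : 0 ≤ Fmax := by rw [hFmaxdef]; positivity
  obtain ⟨Wmax, hWmaxdef⟩ : ∃ r : ℝ, r = 2*Fmax/γ := ⟨_, rfl⟩
  have hWmax0 : 0 ≤ Wmax := by rw [hWmaxdef]; positivity
  obtain ⟨CC, hCCdef⟩ : ∃ r : ℝ, r = η*Wmax + Cψ := ⟨_, rfl⟩
  have hCC0 : 0 ≤ CC := by rw [hCCdef]; positivity
  obtain ⟨JJ, hJJdef⟩ : ∃ r : ℝ, r = (J v₀ + 1 + CC*(M₁/γ)) * Real.exp (L*(M₁/γ)) := ⟨_, rfl⟩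
  obtain ⟨R, hR⟩ := (hJ1 (JJ + Fmax^2)).subset_closedBall 0
  refine ⟨max R 0 + 1, by positivity, ?_⟩
  rintro δ ⟨hδ0, hδ1⟩ vi vseq vδ ⟨hvi0, hADstep⟩ ⟨hAE1, hAE2⟩ t ht
  -- main induction
  have key : ∀ i : ℕ, (i:ℝ)*δ ≤ T → A (vi i) = f ((i:ℝ)*δ) ∧
      J (vi i) + 1 ≤ (J v₀ + 1 + CC*((1/γ) * ∫ s in (0:ℝ)..((i:ℝ)*δ), ‖f' s‖)) *
        Real.exp (L*((1/γ) * ∫ s in (0:ℝ)..((i:ℝ)*δ), ‖f' s‖)) := by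
    intro i
    induction i with
    | zero =>
      intro _
      have h0 : ((0:ℕ):ℝ)*δ = 0 := by norm_num
      rw [hvi0, h0]
      constructor
      · exact hv₀.1
      · rw [intervalIntegral.integral_same]
        simp only [mul_zero, add_zero, Real.exp_zero, mul_one]
        linarith
    | succ i ih =>
      intro hsT
      have hti1c : ((i+1:ℕ):ℝ)*δ = (i:ℝ)*δ + δ := by push_cast; ring
      have hti0 : (0:ℝ) ≤ (i:ℝ)*δ := by positivity
      have htile : (i:ℝ)*δ ≤ ((i+1:ℕ):ℝ)*δ := by rw [hti1c]; linarith
      have hiT : (i:ℝ)*δ ≤ T := le_trans htile hsT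
      have hti10 : (0:ℝ) ≤ ((i+1:ℕ):ℝ)*δ := le_trans hti0 htile
      obtain ⟨hA_i, hJ_i⟩ := ih hiT
      obtain ⟨hseq0, hminmain, hclu⟩ := hADstep (i+1) (by omega) hsT
      rw [show (i+1) - 1 = i from rfl] at hseq0
      -- the shift vector
      obtain ⟨hAwv, hwvle⟩ := hBv (f (((i+1:ℕ):ℝ)*δ) - f ((i:ℝ)*δ))
      obtain ⟨wv, hwvdef⟩ : ∃ z : E, z = Bv (f (((i+1:ℕ):ℝ)*δ) - f ((i:ℝ)*δ)) := ⟨_, rfl⟩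
      rw [← hwvdef] at hAwv hwvle
      have hu : A (vi i + wv) = f (((i+1:ℕ):ℝ)*δ) := by
        rw [map_add, hA_i, hAwv]; abel
      have hwv1 : ‖wv‖ ≤ (1/γ) * ∫ s in ((i:ℝ)*δ)..(((i+1:ℕ):ℝ)*δ), ‖f' s‖ := by
        have h1 := hfdiff ((i:ℝ)*δ) (((i+1:ℕ):ℝ)*δ) hti0 htile hsT
        calc ‖wv‖ ≤ ‖f (((i+1:ℕ):ℝ)*δ) - f ((i:ℝ)*δ)‖/γ := hwvle
        _ ≤ (∫ s in ((i:ℝ)*δ)..(((i+1:ℕ):ℝ)*δ), ‖f' s‖)/γ := by gcongr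
        _ = (1/γ) * ∫ s in ((i:ℝ)*δ)..(((i+1:ℕ):ℝ)*δ), ‖f' s‖ := by ring
      have hwmax : ‖wv‖ ≤ Wmax := by
        have h1 : ‖f (((i+1:ℕ):ℝ)*δ) - f ((i:ℝ)*δ)‖ ≤ 2*Fmax := by
          have h2 := hFmax ((i:ℝ)*δ) hti0 hiT
          have h3 := hFmax (((i+1:ℕ):ℝ)*δ) hti10 hsT
          calc ‖f (((i+1:ℕ):ℝ)*δ) - f ((i:ℝ)*δ)‖
              ≤ ‖f (((i+1:ℕ):ℝ)*δ)‖ + ‖f ((i:ℝ)*δ)‖ := norm_sub_le _ _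
          _ ≤ 2*Fmax := by rw [hFmaxdef]; linarith
        rw [hWmaxdef]
        calc ‖wv‖ ≤ ‖f (((i+1:ℕ):ℝ)*δ) - f ((i:ℝ)*δ)‖/γ := hwvle
        _ ≤ 2*Fmax/γ := by gcongr
      -- descent chain
      have hchain : ∀ j : ℕ, 1 ≤ j →
          J (vseq (i+1) j) + α * ψ (vseq (i+1) j - vseq (i+1) 0) ≤
          J (vi i + wv) + η*‖wv‖^2 + α * ψ wv := by
        intro j
        induction j with
        | zero => omega
        | succ m ihm =>
          intro _
          rcases Nat.eq_zero_or_pos m with hm0 | hm1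
          · subst hm0
            have h1 := (hminmain 0).2 (vi i + wv) hu
            rw [hseq0] at h1 ⊢
            have h2 : vi i + wv - vi i = wv := by abel
            rw [h2] at h1
            have h3 : 0 ≤ η * ‖vseq (i+1) 1 - vi i‖^2 := by positivity
            linarith
          · have h1 := ihm hm1
            obtain ⟨m', rfl⟩ : ∃ m', m = m'+1 := ⟨m-1, by omega⟩
            have hAm : A (vseq (i+1) (m'+1)) = f (((i+1:ℕ):ℝ)*δ) := (hminmain m').1
            have h2 := (hminmain (m'+1)).2 (vseq (i+1) (m'+1)) hAm
            have h3 : ‖vseq (i+1) (m'+1) - vseq (i+1) (m'+1)‖ = 0 := by simp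
            rw [h3] at h2
            have h4 : 0 ≤ η * ‖vseq (i+1) (m'+1+1) - vseq (i+1) (m'+1)‖^2 := by positivity
            nlinarith [h1, h2]
      have hchain' : ∀ j : ℕ, 1 ≤ j → J (vseq (i+1) j) ≤
          J (vi i + wv) + η*‖wv‖^2 + α * ψ wv := by
        intro j hj
        have h1 := hchain j hj
        have h2 := hαψnn (vseq (i+1) j - vseq (i+1) 0)
        linarith
      -- bound on the target value via the shift lemma
      obtain ⟨G, hGdef⟩ : ∃ r : ℝ, r = (J (vi i) + 1) * Real.exp (L*‖wv‖) - 1 + CC*‖wv‖ :=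
        ⟨_, rfl⟩
      have hGb : J (vi i + wv) + η*‖wv‖^2 + α * ψ wv ≤ G := by
        have h1 := hshift (vi i) wv
        have h2 := hCψ wv
        have h3' := mul_le_mul_of_nonneg_left hwmax (mul_nonneg hη.le (norm_nonneg wv))
        have h3 : η*‖wv‖^2 ≤ η*Wmax*‖wv‖ := by nlinarith [h3']
        have h4 : CC*‖wv‖ = η*Wmax*‖wv‖ + Cψ*‖wv‖ := by rw [hCCdef]; ring
        rw [hGdef]
        linarith
      -- cluster point facts
      have hclu' := mapClusterPt_iff_frequently.1 hclu
      have hAvi : A (vi (i+1)) = f (((i+1:ℕ):ℝ)*δ) := by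
        by_contra hne
        have hpos : 0 < ‖A (vi (i+1)) - f (((i+1:ℕ):ℝ)*δ)‖ := by
          rw [norm_pos_iff, sub_ne_zero]; exact hne
        set Ac := LinearMap.toContinuousLinearMap A with hAc
        have hball := hclu' (Metric.ball (vi (i+1))
          (‖A (vi (i+1)) - f (((i+1:ℕ):ℝ)*δ)‖/(‖Ac‖+1)))
          (Metric.ball_mem_nhds _ (by positivity))
        obtain ⟨j, hj1, hj2⟩ := (hball.and_eventually (eventually_ge_atTop 1)).exists
        obtain ⟨j', rfl⟩ : ∃ j', j = j'+1 := ⟨j-1, by omega⟩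
        have hAj : A (vseq (i+1) (j'+1)) = f (((i+1:ℕ):ℝ)*δ) := (hminmain j').1
        have h5 : A (vi (i+1)) - f (((i+1:ℕ):ℝ)*δ) = Ac (vi (i+1) - vseq (i+1) (j'+1)) := by
          rw [hAc]
          show _ = A (vi (i+1) - vseq (i+1) (j'+1))
          rw [map_sub, hAj]
        have h6 : ‖Ac (vi (i+1) - vseq (i+1) (j'+1))‖ ≤ ‖Ac‖ * ‖vi (i+1) - vseq (i+1) (j'+1)‖ :=
          Ac.le_opNorm _
        have h7 : ‖vi (i+1) - vseq (i+1) (j'+1)‖ <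
            ‖A (vi (i+1)) - f (((i+1:ℕ):ℝ)*δ)‖/(‖Ac‖+1) := by
          rw [Metric.mem_ball, dist_eq_norm, ← norm_neg] at hj1
          have : -(vseq (i+1) (j'+1) - vi (i+1)) = vi (i+1) - vseq (i+1) (j'+1) := by abel
          rwa [this] at hj1
        have h8 : 0 ≤ ‖Ac‖ := norm_nonneg _
        have h9 : ‖Ac‖ * ‖vi (i+1) - vseq (i+1) (j'+1)‖ <
            ‖A (vi (i+1)) - f (((i+1:ℕ):ℝ)*δ)‖ := by
          rcases eq_or_lt_of_le h8 with h10 | h10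
          · rw [← h10, zero_mul]; exact hpos
          · calc ‖Ac‖ * ‖vi (i+1) - vseq (i+1) (j'+1)‖
                < ‖Ac‖ * (‖A (vi (i+1)) - f (((i+1:ℕ):ℝ)*δ)‖/(‖Ac‖+1)) := by
                  exact mul_lt_mul_of_pos_left h7 h10
            _ ≤ ‖A (vi (i+1)) - f (((i+1:ℕ):ℝ)*δ)‖ := by
                  rw [← mul_div_assoc, div_le_iff₀ (by positivity : (0:ℝ) < ‖Ac‖+1)]
                  nlinarith [hpos.le, h8]
        have h12 := congrArg norm h5
        linarith [h6, h9, h12.le, h12.ge]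
      have hJvi : J (vi (i+1)) ≤ G := by
        by_contra hgt
        push_neg at hgt
        have hev := hlsc (vi (i+1)) G hgt
        have hball := hclu' _ hev
        obtain ⟨j, hj1, hj2⟩ := (hball.and_eventually (eventually_ge_atTop 1)).exists
        have h1 := hchain' j hj2
        have h2 : G < J (vseq (i+1) j) := hj1
        linarith
      -- final arithmetic
      obtain ⟨Wi, hWidef⟩ : ∃ r : ℝ, r = (1/γ) * ∫ s in (0:ℝ)..((i:ℝ)*δ), ‖f' s‖ := ⟨_, rfl⟩
      obtain ⟨Wi1, hWi1def⟩ : ∃ r : ℝ, r = (1/γ) * ∫ s in (0:ℝ)..(((i+1:ℕ):ℝ)*δ), ‖f' s‖ :=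
        ⟨_, rfl⟩
      rw [← hWidef] at hJ_i
      rw [← hWi1def]
      have hWi0 : 0 ≤ Wi := by
        rw [hWidef]
        have := hInn 0 ((i:ℝ)*δ) hti0
        positivity
      have hWadd : Wi + (1/γ) * (∫ s in ((i:ℝ)*δ)..(((i+1:ℕ):ℝ)*δ), ‖f' s‖) = Wi1 := by
        rw [hWidef, hWi1def, ← hIadd ((i:ℝ)*δ) (((i+1:ℕ):ℝ)*δ) hti0 htile hsT]
        ring
      have hwvWi : Wi + ‖wv‖ ≤ Wi1 := by
        rw [← hWadd]
        linarith [hwv1]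
      have hWi10 : 0 ≤ Wi1 := by
        have := hInn ((i:ℝ)*δ) (((i+1:ℕ):ℝ)*δ) htile
        have h2 : 0 ≤ (1/γ) * (∫ s in ((i:ℝ)*δ)..(((i+1:ℕ):ℝ)*δ), ‖f' s‖) := by positivity
        linarith
      refine ⟨hAvi, ?_⟩
      have e1 : J (vi (i+1)) + 1 ≤ (J (vi i) + 1) * Real.exp (L*‖wv‖) + CC*‖wv‖ := by
        rw [hGdef] at hJvi; linarith
      have e2 : (J (vi i) + 1) * Real.exp (L*‖wv‖) ≤
          ((J v₀ + 1 + CC*Wi) * Real.exp (L*Wi)) * Real.exp (L*‖wv‖) :=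
        mul_le_mul_of_nonneg_right hJ_i (Real.exp_pos _).le
      have e3 : CC*‖wv‖ ≤ (CC*‖wv‖) * (Real.exp (L*Wi) * Real.exp (L*‖wv‖)) := by
        have h1 : 1 ≤ Real.exp (L*Wi) := Real.one_le_exp (by positivity)
        have h2 : 1 ≤ Real.exp (L*‖wv‖) := Real.one_le_exp (by positivity)
        have h3 : 0 ≤ CC*‖wv‖ := by positivity
        have h4 : 1 ≤ Real.exp (L*Wi) * Real.exp (L*‖wv‖) := by nlinarith
        have h5 := mul_le_mul_of_nonneg_left h4 h3
        rw [mul_one] at h5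
        exact h5
      have e4 : ((J v₀ + 1 + CC*Wi) * Real.exp (L*Wi)) * Real.exp (L*‖wv‖)
          + (CC*‖wv‖) * (Real.exp (L*Wi) * Real.exp (L*‖wv‖))
          = (J v₀ + 1 + CC*(Wi + ‖wv‖)) * Real.exp (L*(Wi + ‖wv‖)) := by
        rw [mul_add L Wi ‖wv‖, Real.exp_add]
        ring
      have e5 : (J v₀ + 1 + CC*(Wi + ‖wv‖)) * Real.exp (L*(Wi + ‖wv‖)) ≤
          (J v₀ + 1 + CC*Wi1) * Real.exp (L*Wi1) := by
        have h1 : J v₀ + 1 + CC*(Wi + ‖wv‖) ≤ J v₀ + 1 + CC*Wi1 := by nlinarith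
        have h2 : Real.exp (L*(Wi + ‖wv‖)) ≤ Real.exp (L*Wi1) := by
          apply Real.exp_le_exp.2
          nlinarith
        have h3 : 0 ≤ J v₀ + 1 + CC*(Wi + ‖wv‖) := by
          have h4 : 0 ≤ CC*(Wi+‖wv‖) := by positivity
          linarith [hJnonneg v₀]
        exact mul_le_mul h1 h2 (Real.exp_pos _).le (by linarith [hJnonneg v₀, mul_nonneg hCC0 hWi10])
      linarith
  -- endgame
  obtain ⟨i, hi⟩ : ∃ i : ℕ, i = ⌊t/δ⌋₊ := ⟨_, rfl⟩
  obtain ⟨ht0, htT⟩ := ht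
  have hit : (i:ℝ)*δ ≤ t := by
    rw [hi]
    have h1 : (⌊t/δ⌋₊:ℝ) ≤ t/δ := Nat.floor_le (by positivity)
    rw [← le_div_iff₀ hδ0]
    exact h1
  have hit2 : t < (i:ℝ)*δ + δ := by
    rw [hi]
    have h1 : t/δ < ⌊t/δ⌋₊ + 1 := Nat.lt_floor_add_one _
    have h2 := mul_lt_mul_of_pos_right h1 hδ0
    rw [div_mul_cancel₀ _ (ne_of_gt hδ0)] at h2
    linarith [h2]
  have hiT : (i:ℝ)*δ ≤ T := le_trans hit htT
  have hvt : vδ t = vi i := by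
    apply hAE2 i hiT t
    constructor
    · exact ⟨by linarith, htT⟩
    · exact ⟨hit, hit2⟩
  obtain ⟨hAi, hJi⟩ := key i hiT
  -- bound the J-level uniformly
  have hWle : (1/γ) * (∫ s in (0:ℝ)..((i:ℝ)*δ), ‖f' s‖) ≤ M₁/γ := by
    have h1 := hIle ((i:ℝ)*δ) (by positivity) hiT
    calc (1/γ) * (∫ s in (0:ℝ)..((i:ℝ)*δ), ‖f' s‖) ≤ (1/γ)*M₁ := by gcongr
    _ = M₁/γ := by ring
  have hW0 : 0 ≤ (1/γ) * (∫ s in (0:ℝ)..((i:ℝ)*δ), ‖f' s‖) := by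
    have := hInn 0 ((i:ℝ)*δ) (by positivity)
    positivity
  have hJle : J (vi i) ≤ JJ := by
    have h1 : (J v₀ + 1 + CC*((1/γ) * ∫ s in (0:ℝ)..((i:ℝ)*δ), ‖f' s‖)) *
        Real.exp (L*((1/γ) * ∫ s in (0:ℝ)..((i:ℝ)*δ), ‖f' s‖)) ≤ JJ := by
      rw [hJJdef]
      have h2 : J v₀ + 1 + CC*((1/γ) * ∫ s in (0:ℝ)..((i:ℝ)*δ), ‖f' s‖) ≤
          J v₀ + 1 + CC*(M₁/γ) := by nlinarith
      have h3 : Real.exp (L*((1/γ) * ∫ s in (0:ℝ)..((i:ℝ)*δ), ‖f' s‖)) ≤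
          Real.exp (L*(M₁/γ)) := by
        apply Real.exp_le_exp.2
        nlinarith
      have h4 : 0 ≤ J v₀ + 1 + CC*((1/γ) * ∫ s in (0:ℝ)..((i:ℝ)*δ), ‖f' s‖) := by
        have := mul_nonneg hCC0 hW0
        linarith [hJnonneg v₀]
      exact mul_le_mul h2 h3 (Real.exp_pos _).le
        (by have : 0 ≤ CC*(M₁/γ) := by positivity
            linarith [hJnonneg v₀])
    linarith
  have hmem : vi i ∈ {v : E | J v + ‖A v‖^2 ≤ JJ + Fmax^2} := by
    have h1 : ‖A (vi i)‖ ≤ Fmax := by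
      rw [hAi, hFmaxdef]
      exact hFmax _ (by positivity) hiT
    have h2 : ‖A (vi i)‖^2 ≤ Fmax^2 := by nlinarith [norm_nonneg (A (vi i))]
    exact le_trans (by linarith : J (vi i) + ‖A (vi i)‖^2 ≤ JJ + Fmax^2) (le_refl _)
  have hball := hR hmem
  rw [Metric.mem_closedBall, dist_zero_right] at hball
  rw [hvt]
  calc ‖vi i‖ ≤ R := hball
  _ ≤ max R 0 + 1 := by
      have := le_max_left R 0
      linarith


end
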